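/- Let f : ℝ → ℝ be even (f(t) = f(−t)), nonnegative, nonincreasing on [0,∞), convex on (0,∞), and integrable with f(t) → 0 as t → ∞. Then the Fourier transform F(E) = ∫ f(t) e^{-iEt} dt is real and nonnegative for all E ∈ ℝ. -/

import Mathlib

open MeasureTheory intervalIntegral Filter Real

private lemma polya_convex_four {f : ℝ → ℝ} (hconv : ConvexOn ℝ (Set.Ioi 0) f)
    {x1 x2 x3 x4 : ℝ} (h1 : 0 < x1) (h12 : x1 ≤ x2) (h23 : x2 ≤ x3)
    (h14 : x1 < x4) (hsum : x1 + x4 = x2 + x3) :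
    f x2 + f x3 ≤ f x1 + f x4 := by
  set lam := (x2 - x1) / (x4 - x1) with hlam
  have hd : 0 < x4 - x1 := by linarith
  have hl0 : 0 ≤ lam := div_nonneg (by linarith) hd.le
  have hl1 : lam ≤ 1 := by rw [hlam, div_le_one hd]; linarith
  have hml : lam * (x4 - x1) = x2 - x1 := div_mul_cancel₀ _ hd.ne'
  have m1 : x1 ∈ Set.Ioi (0:ℝ) := h1
  have m4 : x4 ∈ Set.Ioi (0:ℝ) := h1.trans h14
  have h2 := hconv.2 m1 m4 (by linarith : (0:ℝ) ≤ 1 - lam) hl0 (by ring)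
  have h3 := hconv.2 m1 m4 hl0 (by linarith : (0:ℝ) ≤ 1 - lam) (by ring)
  rw [smul_eq_mul, smul_eq_mul, smul_eq_mul, smul_eq_mul] at h2 h3
  have e2 : (1 - lam) * x1 + lam * x4 = x2 := by nlinarith [hml]
  have e3 : lam * x1 + (1 - lam) * x4 = x3 := by nlinarith [hml]
  rw [e2] at h2
  rw [e3] at h3
  nlinarith [h2, h3]

private lemma polya_period {f : ℝ → ℝ}
    (hconv : ConvexOn ℝ (Set.Ioi 0) f)
    {E : ℝ} (hE : 0 < E)
    (hg : Integrable (fun t => f t * Real.cos (E * t)))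
    (k : ℕ) :
    0 ≤ ∫ t in ((k : ℝ) * (2 * π / E))..((k : ℝ) * (2 * π / E) + 2 * π / E),
      f t * Real.cos (E * t) := by
  set g : ℝ → ℝ := fun t => f t * Real.cos (E * t) with hgdef
  set T : ℝ := 2 * π / E with hTdef
  have hT : 0 < T := by positivity
  set Q : ℝ := T / 4 with hQdef
  have hQ : 0 < Q := by positivity
  set a : ℝ := (k : ℝ) * T with hadef
  have ha : 0 ≤ a := by positivity
  have hET : E * T = 2 * π := by rw [hTdef]; field_simp
  have hEa : E * a = (k : ℝ) * (2 * π) := by rw [hadef, mul_comm E, mul_assoc, mul_comm T E, hET]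
  have hEQ : E * Q = π / 2 := by rw [hQdef, ← mul_div_assoc, hET]; ring
  have hii : ∀ u v : ℝ, IntervalIntegrable g volume u v := fun u v => hg.intervalIntegrable
  -- split into quarters
  have split : ∫ t in a..(a + T), g t =
      (((∫ t in a..(a + Q), g t) + ∫ t in (a + Q)..(a + 2 * Q), g t) +
        ∫ t in (a + 2 * Q)..(a + 3 * Q), g t) + ∫ t in (a + 3 * Q)..(a + T), g t := by
    rw [integral_add_adjacent_intervals (hii _ _) (hii _ _),
      integral_add_adjacent_intervals (hii _ _) (hii _ _),
      integral_add_adjacent_intervals (hii _ _) (hii _ _)]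
  -- substitutions
  have q1 : ∫ t in a..(a + Q), g t = ∫ s in (0:ℝ)..Q, g (a + s) := by
    rw [intervalIntegral.integral_comp_add_left g a]; norm_num
  have q2 : ∫ t in (a + Q)..(a + 2 * Q), g t = ∫ s in (0:ℝ)..Q, g (a + 2 * Q - s) := by
    rw [intervalIntegral.integral_comp_sub_left g (a + 2 * Q)]; norm_num
    congr 1; ring
  have q3 : ∫ t in (a + 2 * Q)..(a + 3 * Q), g t = ∫ s in (0:ℝ)..Q, g (a + 2 * Q + s) := by
    rw [intervalIntegral.integral_comp_add_left g (a + 2 * Q)]; norm_num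
    congr 1; ring
  have q4 : ∫ t in (a + 3 * Q)..(a + T), g t = ∫ s in (0:ℝ)..Q, g (a + T - s) := by
    rw [intervalIntegral.integral_comp_sub_left g (a + T)]; norm_num
    have : a + T - Q = a + 3 * Q := by rw [hQdef]; ring
    rw [this]
  have hT4 : T = 4 * Q := by rw [hQdef]; ring
  have c1 : IntervalIntegrable (fun s => g (a + s)) volume 0 Q := by
    have h := (hii a (a + Q)).comp_add_left a
    rw [show a - a = (0:ℝ) by ring, show a + Q - a = Q by ring] at h
    exact h
  have c2 : IntervalIntegrable (fun s => g (a + 2 * Q - s)) volume 0 Q := by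
    have h := (hii (a + 2 * Q) (a + Q)).comp_sub_left (a + 2 * Q)
    rw [show a + 2 * Q - (a + 2 * Q) = (0:ℝ) by ring,
      show a + 2 * Q - (a + Q) = Q by ring] at h
    exact h
  have c3 : IntervalIntegrable (fun s => g (a + 2 * Q + s)) volume 0 Q := by
    have h := (hii (a + 2 * Q) (a + 3 * Q)).comp_add_left (a + 2 * Q)
    rw [show a + 2 * Q - (a + 2 * Q) = (0:ℝ) by ring,
      show a + 3 * Q - (a + 2 * Q) = Q by ring] at h
    exact h
  have c4 : IntervalIntegrable (fun s => g (a + T - s)) volume 0 Q := by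
    have h := (hii (a + T) (a + 3 * Q)).comp_sub_left (a + T)
    rw [show a + T - (a + T) = (0:ℝ) by ring,
      show a + T - (a + 3 * Q) = Q by rw [hT4]; ring] at h
    exact h
  have comb : ∫ t in a..(a + T), g t =
      ∫ s in (0:ℝ)..Q, (g (a + s) + g (a + 2 * Q - s) + g (a + 2 * Q + s) + g (a + T - s)) := by
    rw [split, q1, q2, q3, q4, ← integral_add c1 c2, ← integral_add (c1.add c2) c3,
      ← integral_add ((c1.add c2).add c3) c4]
  rw [comb]
  apply intervalIntegral.integral_nonneg_of_ae_restrict hQ.le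
  have h0 : ∀ᵐ s : ℝ, s ≠ 0 := by
    rw [MeasureTheory.ae_iff]
    simpa using Real.volume_singleton
  filter_upwards [MeasureTheory.ae_restrict_of_ae h0,
    MeasureTheory.ae_restrict_mem measurableSet_Icc] with s hs0 hs
  obtain ⟨hs0', hsQ⟩ := hs
  have hs' : 0 < s := lt_of_le_of_ne hs0' (Ne.symm hs0)
  have cos1 : Real.cos (E * (a + s)) = Real.cos (E * s) := by
    have he : E * (a + s) = E * s + (k : ℤ) * (2 * π) := by
      push_cast; rw [mul_add, hEa]; ring
    rw [he, Real.cos_add_int_mul_two_pi]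
  have h2Q : E * (2 * Q) = π := by rw [show E * (2 * Q) = 2 * (E * Q) by ring, hEQ]; ring
  have cos2 : Real.cos (E * (a + 2 * Q - s)) = -Real.cos (E * s) := by
    have he : E * (a + 2 * Q - s) = (π - E * s) + (k : ℤ) * (2 * π) := by
      push_cast
      rw [show E * (a + 2 * Q - s) = E * a + E * (2 * Q) - E * s by ring, hEa, h2Q]; ring
    rw [he, Real.cos_add_int_mul_two_pi, Real.cos_pi_sub]
  have cos3 : Real.cos (E * (a + 2 * Q + s)) = -Real.cos (E * s) := by
    have he : E * (a + 2 * Q + s) = (E * s + π) + (k : ℤ) * (2 * π) := by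
      push_cast
      rw [show E * (a + 2 * Q + s) = E * a + E * (2 * Q) + E * s by ring, hEa, h2Q]; ring
    rw [he, Real.cos_add_int_mul_two_pi, Real.cos_add_pi]
  have cos4 : Real.cos (E * (a + T - s)) = Real.cos (E * s) := by
    have he : E * (a + T - s) = -(E * s) + (((k : ℤ) + 1 : ℤ) : ℝ) * (2 * π) := by
      push_cast
      rw [show E * (a + T - s) = E * a + E * T - E * s by ring, hEa, hET]; ring
    rw [he, Real.cos_add_int_mul_two_pi, Real.cos_neg]
  have hfb : f (a + 2 * Q - s) + f (a + 2 * Q + s) ≤ f (a + s) + f (a + T - s) := by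
    apply polya_convex_four hconv
    · linarith
    · linarith
    · linarith
    · rw [hT4]; linarith
    · rw [hT4]; ring
  have hcos : 0 ≤ Real.cos (E * s) := by
    apply Real.cos_nonneg_of_mem_Icc
    constructor
    · nlinarith [Real.pi_pos, mul_nonneg hE.le hs0']
    · calc E * s ≤ E * Q := by nlinarith
        _ = π / 2 := hEQ
  have : 0 ≤ Real.cos (E * s) *
      (f (a + s) - f (a + 2 * Q - s) - f (a + 2 * Q + s) + f (a + T - s)) :=
    mul_nonneg hcos (by linarith)
  calc (0:ℝ) ≤ _ := this
    _ = g (a + s) + g (a + 2 * Q - s) + g (a + 2 * Q + s) + g (a + T - s) := by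
      simp only [hgdef, cos1, cos2, cos3, cos4]; ring

private lemma polya_nonneg {f : ℝ → ℝ} (heven : ∀ t, f (-t) = f t)
    (hconv : ConvexOn ℝ (Set.Ioi 0) f) (hint : Integrable f) {E : ℝ} (hE : 0 < E) :
    0 ≤ ∫ t : ℝ, f t * Real.cos (E * t) := by
  have hg : Integrable (fun t => f t * Real.cos (E * t)) := by
    have h := hint.bdd_mul (c := 1)
      ((Real.continuous_cos.comp (continuous_const.mul continuous_id)).aestronglyMeasurable)
      (MeasureTheory.ae_of_all _ fun t => by
        simpa [Real.norm_eq_abs] using Real.abs_cos_le_one (E * t))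
    simpa [mul_comm] using h
  set T : ℝ := 2 * π / E with hTdef
  have hT : 0 < T := by positivity
  have pos : ∀ n : ℕ, 0 ≤ ∫ t in (0:ℝ)..((n:ℝ) * T), f t * Real.cos (E * t) := by
    intro n
    have hsum := intervalIntegral.sum_integral_adjacent_intervals
      (a := fun k : ℕ => (k : ℝ) * T) (n := n) (μ := volume)
      (f := fun t => f t * Real.cos (E * t)) (fun k _ => hg.intervalIntegrable)
    simp only [Nat.cast_zero, zero_mul] at hsum
    rw [← hsum]
    apply Finset.sum_nonneg
    intro k _
    have h := polya_period hconv hE hg k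
    have e : ((k+1 : ℕ) : ℝ) * T = (k : ℝ) * T + T := by push_cast; ring
    rw [e]
    exact h
  have hgev : (fun x => f (-x) * Real.cos (E * (-x))) = fun x => f x * Real.cos (E * x) := by
    funext x
    rw [heven x, show E * (-x) = -(E * x) by ring, Real.cos_neg]
  have evext : ∀ b : ℝ, (∫ t in (-b)..b, f t * Real.cos (E * t)) =
      2 * ∫ t in (0:ℝ)..b, f t * Real.cos (E * t) := by
    intro b
    have e1 : (∫ t in (-b)..(0:ℝ), f t * Real.cos (E * t)) =
        ∫ t in (0:ℝ)..b, f t * Real.cos (E * t) := by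
      have h := intervalIntegral.integral_comp_neg
        (a := (0:ℝ)) (b := b) (f := fun t => f t * Real.cos (E * t))
      rw [hgev] at h
      simp only [neg_zero] at h
      exact h.symm
    rw [← integral_add_adjacent_intervals (a := -b) (b := (0:ℝ)) (c := b)
      hg.intervalIntegrable hg.intervalIntegrable, e1]
    ring
  have tb : Tendsto (fun n : ℕ => (n : ℝ) * T) atTop atTop :=
    tendsto_natCast_atTop_atTop.atTop_mul_const hT
  have ta : Tendsto (fun n : ℕ => -((n : ℝ) * T)) atTop atBot :=
    tendsto_neg_atTop_atBot.comp tb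
  have lim := MeasureTheory.intervalIntegral_tendsto_integral hg ta tb
  refine ge_of_tendsto' lim fun n => ?_
  rw [evext]
  linarith [pos n]

private lemma my_integral_ofReal {g : ℝ → ℝ} :
    (∫ t : ℝ, ((g t : ℝ) : ℂ)) = ((∫ t : ℝ, g t : ℝ) : ℂ) :=
  _root_.integral_ofReal


/-- Pólya's criterion: an even, nonnegative, nonincreasing-on-`[0,∞)`,
convex-on-`(0,∞)`, integrable function tending to `0` at infinity has a real nonnegative
Fourier transform. -/
theorem stmt13 (f : ℝ → ℝ) (heven : ∀ t, f (-t) = f t) (hnonneg : ∀ t, 0 ≤ f t)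
    (hmono : AntitoneOn f (Set.Ici 0)) (hconv : ConvexOn ℝ (Set.Ioi 0) f)
    (hint : MeasureTheory.Integrable f)
    (hlim : Filter.Tendsto f Filter.atTop (nhds 0)) (E : ℝ) :
    ∃ r : ℝ, 0 ≤ r ∧
      (∫ t : ℝ, ((f t : ℝ) : ℂ) * Complex.exp (-((E * t : ℝ) : ℂ) * Complex.I)) = (r : ℂ) := by
  have hcos_int : Integrable (fun t => f t * Real.cos (E * t)) := by
    have h := hint.bdd_mul (c := 1)
      ((Real.continuous_cos.comp (continuous_const.mul continuous_id)).aestronglyMeasurable)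
      (MeasureTheory.ae_of_all _ fun t => by
        simpa [Real.norm_eq_abs] using Real.abs_cos_le_one (E * t))
    simpa [mul_comm] using h
  have hsin_int : Integrable (fun t => f t * Real.sin (E * t)) := by
    have h := hint.bdd_mul (c := 1)
      ((Real.continuous_sin.comp (continuous_const.mul continuous_id)).aestronglyMeasurable)
      (MeasureTheory.ae_of_all _ fun t => by
        simpa [Real.norm_eq_abs] using Real.abs_sin_le_one (E * t))
    simpa [mul_comm] using h
  refine ⟨∫ t : ℝ, f t * Real.cos (E * t), ?_, ?_⟩
  · rcases lt_trichotomy E 0 with hE | hE | hE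
    · have hpt : ∀ t : ℝ, f t * Real.cos (E * t) = f t * Real.cos (-E * t) := fun t => by
        rw [show -E * t = -(E * t) by ring, Real.cos_neg]
      simp only [hpt]
      exact polya_nonneg heven hconv hint (neg_pos.mpr hE)
    · rw [hE]
      simp only [zero_mul, Real.cos_zero, mul_one]
      exact MeasureTheory.integral_nonneg hnonneg
    · exact polya_nonneg heven hconv hint hE
  · have hsin0 : (∫ t : ℝ, f t * Real.sin (E * t)) = 0 := by
      have h := MeasureTheory.integral_neg_eq_self
        (fun t => f t * Real.sin (E * t)) volume
      have e : (fun t : ℝ => f (-t) * Real.sin (E * -t)) =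
          fun t => -(f t * Real.sin (E * t)) := by
        funext t
        rw [heven t, show E * (-t) = -(E * t) by ring, Real.sin_neg]
        ring
      rw [e, MeasureTheory.integral_neg] at h
      linarith
    have hpt : ∀ t : ℝ, ((f t : ℝ) : ℂ) * Complex.exp (-((E * t : ℝ) : ℂ) * Complex.I)
        = (((f t * Real.cos (E * t) : ℝ)) : ℂ)
          - (((f t * Real.sin (E * t) : ℝ)) : ℂ) * Complex.I := by
      intro t
      rw [show -((E * t : ℝ) : ℂ) = (((-(E * t) : ℝ)) : ℂ) by push_cast; ring,
        Complex.exp_mul_I, ← Complex.ofReal_cos, ← Complex.ofReal_sin,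
        Real.cos_neg, Real.sin_neg]
      push_cast
      ring
    simp only [hpt]
    rw [MeasureTheory.integral_sub
        (f := fun t : ℝ => ((f t * Real.cos (E * t) : ℝ) : ℂ))
        (g := fun t : ℝ => ((f t * Real.sin (E * t) : ℝ) : ℂ) * Complex.I)
        hcos_int.ofReal (hsin_int.ofReal.mul_const Complex.I),
      MeasureTheory.integral_mul_const, my_integral_ofReal,
      my_integral_ofReal, hsin0]
    simp
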